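/- With connection components A_k^1 = (-k₂𝐢 - k₃𝐣 - k₄𝐤)/(1+|κ|²), A_k^2 = (k₁𝐢 - k₄𝐣 + k₃𝐤)/(1+|κ|²), A_k^3 = (k₄𝐢 + k₁𝐣 - k₂𝐤)/(1+|κ|²), A_k^4 = (-k₃𝐢 + k₂𝐣 + k₁𝐤)/(1+|κ|²), the curvature components F_k^{ij} = Δ_i A_k^j - Δ_j A_k^i + A_k^i A_{τ_i k}^j - A_k^j A_{τ_j k}^i are pure imaginary quaternions (i.e., su(2)-valued) for all k if and only if k₁ = k₂ = k₃ = k₄; equivalently, the real part of F_k^{ij} equals M_i(k_i k_j + k_j) - M_j(k_i k_j + k_i), where M_i = 1/((1+|κ|²)(1+|τ_iκ|²)), and this vanishes for all i < j iff k₁ = k₂ = k₃ = k₄. -/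

import Mathlib

/-- Multi-indices `k = (k₁,k₂,k₃,k₄) ∈ ℤ⁴`. -/
abbrev Idx := Fin 4 → ℤ

/-- The shift operator `τ_i` incrementing the `i`-th index. -/
def tau (i : Fin 4) (k : Idx) : Idx := Function.update k i (k i + 1)

/-- The quaternion `κ = k₁ + k₂𝐢 + k₃𝐣 + k₄𝐤`. -/
noncomputable def kappa (k : Idx) : Quaternion ℝ := ⟨k 0, k 1, k 2, k 3⟩

/-- The anti-instanton connection components
`A_k^1 = (-k₂𝐢 - k₃𝐣 - k₄𝐤)/(1+|κ|²)`, `A_k^2 = (k₁𝐢 - k₄𝐣 + k₃𝐤)/(1+|κ|²)`,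
`A_k^3 = (k₄𝐢 + k₁𝐣 - k₂𝐤)/(1+|κ|²)`, `A_k^4 = (-k₃𝐢 + k₂𝐣 + k₁𝐤)/(1+|κ|²)`. -/
noncomputable def Aconn (k : Idx) (i : Fin 4) : Quaternion ℝ :=
  (1 + Quaternion.normSq (kappa k))⁻¹ •
    (![(⟨0, -(k 1 : ℝ), -(k 2 : ℝ), -(k 3 : ℝ)⟩ : Quaternion ℝ),
       ⟨0, (k 0 : ℝ), -(k 3 : ℝ), (k 2 : ℝ)⟩,
       ⟨0, (k 3 : ℝ), (k 0 : ℝ), -(k 1 : ℝ)⟩,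
       ⟨0, -(k 2 : ℝ), (k 1 : ℝ), (k 0 : ℝ)⟩] i)

/-- The discrete curvature components
`F_k^{ij} = Δ_i A_k^j - Δ_j A_k^i + A_k^i A_{τ_i k}^j - A_k^j A_{τ_j k}^i`. -/
noncomputable def Fcurv (k : Idx) (i j : Fin 4) : Quaternion ℝ :=
  (Aconn (tau i k) j - Aconn k j) - (Aconn (tau j k) i - Aconn k i)
    + Aconn k i * Aconn (tau i k) j - Aconn k j * Aconn (tau j k) i

lemma aux_eq (x y s : ℝ) (hs : 0 ≤ s)
    (h : (1+(x^2+y^2+s))⁻¹ * ((1+((x+1)^2+y^2+s))⁻¹) * (y*(x+1))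
       - (1+(x^2+y^2+s))⁻¹ * ((1+(x^2+(y+1)^2+s))⁻¹) * (x*(y+1)) = 0) : x = y := by
  have d1 : (1+(x^2+y^2+s)) ≠ 0 := by positivity
  have d2 : (1+((x+1)^2+y^2+s)) ≠ 0 := by positivity
  have d3 : (1+(x^2+(y+1)^2+s)) ≠ 0 := by positivity
  field_simp at h
  have h2 : (y - x) * (((x+y+1)^2 + s + 1) * (1+(x^2+y^2+s))) = 0 := by linear_combination (1+(x^2+y^2+s)) * h
  have hq : (0:ℝ) < ((x+y+1)^2 + s + 1) * (1+(x^2+y^2+s)) := by positivity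
  rcases mul_eq_zero.1 h2 with h3 | h3
  · linarith
  · exact absurd h3 hq.ne'

lemma normSq_kappa (k : Idx) :
    Quaternion.normSq (kappa k) = (k 0:ℝ)^2 + (k 1:ℝ)^2 + (k 2:ℝ)^2 + (k 3:ℝ)^2 := by
  exact Quaternion.normSq_def' (kappa k)

set_option maxHeartbeats 2000000 in
set_option maxRecDepth 8000 in
/-- For the anti-instanton connection, the curvature components `F_k^{ij}` are
pure imaginary quaternions (i.e. `su(2)`-valued) for all `i < j` if and only if
`k₁ = k₂ = k₃ = k₄`. -/
theorem Fcurv_su2_iff (k : Idx) :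
    (∀ i j : Fin 4, i < j → (Fcurv k i j).re = 0) ↔
      (k 0 = k 1 ∧ k 1 = k 2 ∧ k 2 = k 3) := by
  constructor
  · intro h
    have h01 := h 0 1 (by decide)
    have h12 := h 1 2 (by decide)
    have h23 := h 2 3 (by decide)
    simp only [Fcurv, Quaternion.re_sub, Quaternion.re_add, Quaternion.re_mul] at h01 h12 h23
    simp only [Aconn, normSq_kappa] at h01 h12 h23
    simp [Fcurv, Aconn, tau, kappa, Quaternion.normSq_def', Function.update_apply,
      Quaternion.re_mul, Quaternion.re_smul] at h01 h12 h23
    refine ⟨?_, ?_, ?_⟩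
    · exact_mod_cast aux_eq (k 0) (k 1) ((k 2:ℝ)^2 + (k 3:ℝ)^2) (by positivity)
        (by linear_combination h01)
    · exact_mod_cast aux_eq (k 1) (k 2) ((k 0:ℝ)^2 + (k 3:ℝ)^2) (by positivity)
        (by linear_combination h12)
    · exact_mod_cast aux_eq (k 2) (k 3) ((k 0:ℝ)^2 + (k 1:ℝ)^2) (by positivity)
        (by linear_combination h23)
  · rintro ⟨h1, h2, h3⟩ i j hij
    have r1 : (k 1 : ℝ) = k 0 := by exact_mod_cast h1.symm
    have r2 : (k 2 : ℝ) = k 0 := by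
      have : k 2 = k 0 := by omega
      exact_mod_cast this
    have r3 : (k 3 : ℝ) = k 0 := by
      have : k 3 = k 0 := by omega
      exact_mod_cast this
    fin_cases i <;> fin_cases j <;>
      first
        | exact absurd hij (by decide)
        | (simp only [Fcurv, Quaternion.re_sub, Quaternion.re_add, Quaternion.re_mul]
           simp only [Aconn, normSq_kappa]
           simp [Fcurv, Aconn, tau, kappa, Quaternion.normSq_def', Function.update_apply,
            Quaternion.re_mul, Quaternion.re_smul, r1, r2, r3]
           ring)
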